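/- Let γ ∈ (0,1), δ ∈ (0,1], and ρ > 0 with ρ² ≤ γ²δ/64. Define f(x) = ((1−γ)x + ρ)/(1 − ρ(1−γ)x), let ξ⋆ = (γ − √(γ² − 4(1−γ)ρ²))/(2ρ(1−γ)) (the discriminant condition 4(1−γ)ρ² ≤ γ² holds under the stated hypotheses), and define (ξ_t)_{t≥0} by ξ_0 = √(1−δ)/√δ and ξ_t = f(ξ_{t−1}) for t ≥ 1. Then for every t ≥ 0, |ξ_t − ξ⋆| ≤ e^{−tγ/2} · δ^{−1/2}. -/
import Mathlib

private lemma aux_sq_le (a b : ℝ) (hb : 0 ≤ b) (h : a ^ 2 ≤ b ^ 2) (ha : 0 ≤ a) :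
    a ≤ b := by nlinarith

private lemma aux_contract (γ p q : ℝ) (hγ0 : 0 < γ) (hγ1 : γ < 1)
    (hp0 : 0 ≤ p) (hp : p ≤ γ / 32) (hq0 : 0 ≤ q) (hq : q ≤ γ * (1 - γ) / 8) :
    (1 - γ) * (1 + p) ≤ (1 - γ / 2) * (1 - q) := by
  nlinarith [mul_le_mul_of_nonneg_left hp (show (0:ℝ) ≤ 1 - γ by linarith),
    mul_le_mul_of_nonneg_left hq (show (0:ℝ) ≤ 1 - γ / 2 by linarith),
    mul_nonneg (mul_nonneg hγ0.le hγ0.le) (show (0:ℝ) ≤ 1 - γ by linarith)]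

private lemma aux_D (γ δ ρ : ℝ) (hγ0 : 0 < γ) (hγ1 : γ < 1) (hδ1 : δ ≤ 1)
    (h : ρ ^ 2 ≤ γ ^ 2 * δ / 64) : 0 ≤ γ ^ 2 - 4 * (1 - γ) * ρ ^ 2 := by
  nlinarith [mul_nonneg hγ0.le (sq_nonneg ρ),
    mul_nonneg (sq_nonneg γ) (show (0:ℝ) ≤ 1 - δ by linarith)]

set_option maxHeartbeats 1000000 in
/-- Claim (11) in the proof of the truncated power method theorem: the iterates
of the Möbius-type map converge exponentially fast to the fixed point `ξ⋆`,
with `|ξ_t − ξ⋆| ≤ e^{−tγ/2} δ^{−1/2}`. -/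
theorem moebius_iteration_exponential_convergence (γ δ ρ : ℝ)
    (hγ : γ ∈ Set.Ioo (0 : ℝ) 1) (hδ0 : 0 < δ) (hδ1 : δ ≤ 1) (hρ : 0 < ρ)
    (hρ2 : ρ ^ 2 ≤ γ ^ 2 * δ / 64)
    (f : ℝ → ℝ) (hf : ∀ x, f x = ((1 - γ) * x + ρ) / (1 - ρ * (1 - γ) * x))
    (ξs : ℝ)
    (hξs : ξs = (γ - Real.sqrt (γ ^ 2 - 4 * (1 - γ) * ρ ^ 2)) / (2 * ρ * (1 - γ)))
    (ξ : ℕ → ℝ) (hξ0 : ξ 0 = Real.sqrt (1 - δ) / Real.sqrt δ)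
    (hrec : ∀ t : ℕ, ξ (t + 1) = f (ξ t)) :
    ∀ t : ℕ, |ξ t - ξs| ≤ Real.exp (-(t : ℝ) * γ / 2) * (Real.sqrt δ)⁻¹ := by
  obtain ⟨hγ0, hγ1⟩ := hγ
  set w := Real.sqrt δ with hw
  set v := w⁻¹ with hv
  have hw0 : 0 < w := Real.sqrt_pos.mpr hδ0
  have hw2 : w ^ 2 = δ := Real.sq_sqrt hδ0.le
  have hw1 : w ≤ 1 := Real.sqrt_le_one.mpr hδ1
  have hv0 : 0 < v := by positivity
  have hwv : w * v = 1 := mul_inv_cancel₀ hw0.ne'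
  have hvw : v * w = 1 := by rw [mul_comm]; exact hwv
  have hv1 : 1 ≤ v := by
    have := mul_le_mul_of_nonneg_left hw1 hv0.le
    rw [mul_one] at this; linarith [hvw]
  have hwv' : w ≤ v := hw1.trans hv1
  have h1γ : (0:ℝ) < 1 - γ := by linarith
  -- ρ ≤ γ w / 8
  have hsq : (γ * w / 8) ^ 2 = γ ^ 2 * δ / 64 := by
    rw [show (γ * w / 8) ^ 2 = γ ^ 2 * w ^ 2 / 64 from by ring, hw2]
  have hρw : ρ ≤ γ * w / 8 :=
    aux_sq_le ρ (γ * w / 8) (by positivity) (by rw [hsq]; exact hρ2) hρ.le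
  -- discriminant
  set D := γ ^ 2 - 4 * (1 - γ) * ρ ^ 2 with hD
  have hD0 : 0 ≤ D := aux_D γ δ ρ hγ0 hγ1 hδ1 hρ2
  set s := Real.sqrt D with hs
  have hs2 : s ^ 2 = D := Real.sq_sqrt hD0
  have hs0 : 0 ≤ s := Real.sqrt_nonneg _
  have hsγ : s ≤ γ := by
    have hDle : D ≤ γ ^ 2 := by
      have : (0:ℝ) ≤ 4 * (1 - γ) * ρ ^ 2 := by positivity
      rw [hD]; linarith
    have h := Real.sqrt_le_sqrt hDle
    rwa [Real.sqrt_sq hγ0.le] at h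
  have hden : (2 : ℝ) * ρ * (1 - γ) ≠ 0 := by positivity
  -- ξs is nonnegative
  have hξs0 : 0 ≤ ξs := by
    rw [hξs]
    apply div_nonneg (by linarith) (by positivity)
  have e1 : ξs * (2 * ρ * (1 - γ)) = γ - s := by
    rw [hξs]; exact div_mul_cancel₀ _ hden
  -- fixed point quadratic
  have quad : ρ * (1 - γ) * ξs ^ 2 - γ * ξs + ρ = 0 := by
    have h4 : (4 * ρ * (1 - γ)) * (ρ * (1 - γ) * ξs ^ 2 - γ * ξs + ρ) = 0 := by
      linear_combination hs2 + (2 * ρ * (1 - γ) * ξs - γ - s) * e1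
    exact (mul_eq_zero.mp h4).resolve_left (by positivity)
  -- ξs * (γ + s) = 2 ρ
  have hξs_id : ξs * (γ + s) = 2 * ρ := by
    have h2 : (2 * ρ * (1 - γ)) * (ξs * (γ + s) - 2 * ρ) = 0 := by
      linear_combination (γ + s) * e1 - hs2
    have := (mul_eq_zero.mp h2).resolve_left (by positivity)
    linarith
  -- ξs ≤ w / 4
  have hξsw : ξs ≤ w / 4 := by
    have hss : 0 ≤ ξs * s := mul_nonneg hξs0 hs0
    have h1 : γ * ξs ≤ γ * (w / 4) := by linarith [hξs_id, hρw, hss]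
    exact le_of_mul_le_mul_left h1 hγ0
  -- main invariant
  have key : ∀ t, 0 ≤ ξ t ∧ ξ t ≤ v ∧ |ξ t - ξs| ≤ (1 - γ / 2) ^ t * v := by
    intro t
    induction t with
    | zero =>
      have h0 : 0 ≤ ξ 0 := by rw [hξ0]; positivity
      have h1 : ξ 0 ≤ v := by
        rw [hξ0]
        have hle : Real.sqrt (1 - δ) ≤ 1 := Real.sqrt_le_one.mpr (by linarith)
        rw [div_le_iff₀ hw0]
        linarith [hvw]
      refine ⟨h0, h1, ?_⟩
      have hξsv : ξs ≤ v := by linarith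
      rw [pow_zero, one_mul, abs_le]
      constructor <;> linarith
    | succ n ih =>
      obtain ⟨hx0, hxv, hxd⟩ := ih
      set x := ξ n with hxdef
      -- denominator bounds
      have hρx : ρ * x ≤ γ / 8 := by
        calc ρ * x ≤ (γ * w / 8) * v := by
              apply mul_le_mul hρw hxv hx0 (by positivity)
          _ = γ / 8 := by rw [show γ * w / 8 * v = γ / 8 * (w * v) from by ring, hwv, mul_one]
      have hd1 : ρ * (1 - γ) * x ≤ γ * (1 - γ) / 8 := by
        have h := mul_le_mul_of_nonneg_right hρx h1γ.le
        linarith [h]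
      have hd2 : γ * (1 - γ) / 8 ≤ 1 / 32 := by linarith [sq_nonneg (γ - 1 / 2)]
      have hdpos : (0:ℝ) < 1 - ρ * (1 - γ) * x := by linarith
      have hfx : ξ (n + 1) = ((1 - γ) * x + ρ) / (1 - ρ * (1 - γ) * x) := by
        rw [hrec n, hf]
      -- nonnegativity
      have h0' : 0 ≤ ξ (n + 1) := by
        rw [hfx]
        exact div_nonneg (add_nonneg (mul_nonneg h1γ.le hx0) hρ.le) hdpos.le
      -- upper bound
      have h1' : ξ (n + 1) ≤ v := by
        rw [hfx, div_le_iff₀ hdpos]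
        have e1' : ρ ≤ γ * v / 8 := le_trans hρw (by
          have := mul_le_mul_of_nonneg_left hwv' hγ0.le; linarith)
        have e2' : v * (ρ * (1 - γ) * x) ≤ γ * v / 8 := by
          have hA := mul_le_mul_of_nonneg_right hρx hv0.le
          have hB : 0 ≤ γ * ρ * x * v :=
            mul_nonneg (mul_nonneg (mul_nonneg hγ0.le hρ.le) hx0) hv0.le
          linarith [hA, hB]
        have e3' : (1 - γ) * x ≤ (1 - γ) * v := mul_le_mul_of_nonneg_left hxv h1γ.le
        have e4' : (0:ℝ) ≤ γ * v := by positivity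
        linarith [e1', e2', e3', e4']
      refine ⟨h0', h1', ?_⟩
      -- contraction identity
      have hid : (ξ (n + 1) - ξs) * (1 - ρ * (1 - γ) * x) =
          ((1 - γ) * (1 + ρ * ξs)) * (x - ξs) := by
        rw [hfx, sub_mul, div_mul_cancel₀ _ hdpos.ne']
        linear_combination quad
      have hc0 : 0 ≤ (1 - γ) * (1 + ρ * ξs) :=
        mul_nonneg h1γ.le (by positivity)
      have habs : |ξ (n + 1) - ξs| * (1 - ρ * (1 - γ) * x) =
          ((1 - γ) * (1 + ρ * ξs)) * |x - ξs| := by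
        have h := congrArg abs hid
        rwa [abs_mul, abs_mul, abs_of_pos hdpos, abs_of_nonneg hc0] at h
      -- factor bound
      have hρξs : ρ * ξs ≤ γ / 32 := by
        have hm : ρ * ξs ≤ (γ * w / 8) * (w / 4) :=
          mul_le_mul hρw hξsw hξs0 (by positivity)
        have heq : (γ * w / 8) * (w / 4) = γ * δ / 32 := by
          rw [show (γ * w / 8) * (w / 4) = γ * w ^ 2 / 32 from by ring, hw2]
        have hγδ := mul_le_mul_of_nonneg_left hδ1 hγ0.le
        rw [heq] at hm; rw [mul_one] at hγδ; linarith
      have hcb : (1 - γ) * (1 + ρ * ξs) ≤ (1 - γ / 2) * (1 - ρ * (1 - γ) * x) :=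
        aux_contract γ (ρ * ξs) (ρ * (1 - γ) * x) hγ0 hγ1
          (mul_nonneg hρ.le hξs0) hρξs
          (mul_nonneg (mul_nonneg hρ.le h1γ.le) hx0) hd1
      have hstep : |ξ (n + 1) - ξs| ≤ (1 - γ / 2) * |x - ξs| := by
        apply le_of_mul_le_mul_right _ hdpos
        calc |ξ (n + 1) - ξs| * (1 - ρ * (1 - γ) * x)
            = ((1 - γ) * (1 + ρ * ξs)) * |x - ξs| := habs
          _ ≤ ((1 - γ / 2) * (1 - ρ * (1 - γ) * x)) * |x - ξs| :=
              mul_le_mul_of_nonneg_right hcb (abs_nonneg _)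
          _ = (1 - γ / 2) * |x - ξs| * (1 - ρ * (1 - γ) * x) := by ring
      calc |ξ (n + 1) - ξs| ≤ (1 - γ / 2) * |x - ξs| := hstep
        _ ≤ (1 - γ / 2) * ((1 - γ / 2) ^ n * v) := by
            apply mul_le_mul_of_nonneg_left hxd (by linarith)
        _ = (1 - γ / 2) ^ (n + 1) * v := by ring
  -- conclude
  intro t
  obtain ⟨-, -, h⟩ := key t
  refine h.trans ?_
  apply mul_le_mul_of_nonneg_right _ hv0.le
  have h1 : 1 - γ / 2 ≤ Real.exp (-(γ / 2)) := by
    have := Real.add_one_le_exp (-(γ / 2))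
    linarith
  calc (1 - γ / 2) ^ t ≤ Real.exp (-(γ / 2)) ^ t := by
        apply pow_le_pow_left₀ (by linarith) h1
    _ = Real.exp (-(t : ℝ) * γ / 2) := by
        rw [← Real.exp_nat_mul]
        congr 1
        ring
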